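/- Let P be a finite graded poset of rank r (i.e. P is ranked with maximum rank value r) for which J(P) is tCDE. Then the edge density of J(P) satisfies E(uni_{J(P)}; ddeg) = #P / (r + 2). -/

import Mathlib

open scoped Classical

noncomputable section

namespace CDEPaper

/-- The down-degree of `p`: the number of elements that `p` covers, as a real number. -/
def ddeg {α : Type*} [PartialOrder α] (p : α) : ℝ :=
  (Nat.card {q : α // q ⋖ p} : ℝ)

/-- The expectation of the statistic `f` with respect to the weights `μ`. -/
def expect {α : Type*} (μ : α → ℝ) (f : α → ℝ) : ℝ :=
  ∑ᶠ p, μ p * f p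

/-- The uniform distribution on a finite type. -/
def uni (α : Type*) : α → ℝ :=
  fun _ => (Nat.card α : ℝ)⁻¹

/-- `μ` is a probability distribution. -/
def IsProbDist {α : Type*} (μ : α → ℝ) : Prop :=
  (∀ x, 0 ≤ μ x) ∧ (∑ᶠ x, μ x) = 1

/-- The `k`-chain distribution: each `p` gets probability proportional to the number of
`k`-chains (strictly increasing sequences `c₀ < c₁ < ⋯ < c_k`) passing through `p`. -/
def chainDist (α : Type*) [PartialOrder α] (k : ℕ) : α → ℝ := fun p =>
  (Nat.card {c : Fin (k + 1) → α // StrictMono c ∧ ∃ i, c i = p} : ℝ) /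
    (((k : ℝ) + 1) * (Nat.card {c : Fin (k + 1) → α // StrictMono c} : ℝ))

/-- The `m`-multichain distribution: each `p` gets probability proportional to the number of
`m`-multichains (weakly increasing sequences) passing through `p`. -/
def mchainDist (α : Type*) [PartialOrder α] (m : ℕ) : α → ℝ := fun p =>
  (Nat.card {c : Fin (m + 1) → α // Monotone c ∧ ∃ i, c i = p} : ℝ) /
    (Nat.card {cq : (Fin (m + 1) → α) × α // Monotone cq.1 ∧ ∃ i, cq.1 i = cq.2} : ℝ)

/-- The modified `m`-multichain distribution: each `p` gets probability proportional to the
number of pairs `(c, i)` where `c` is an `m`-multichain and `c i = p`. -/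
def mhatDist (α : Type*) [PartialOrder α] (m : ℕ) : α → ℝ := fun p =>
  (Nat.card {ci : (Fin (m + 1) → α) × Fin (m + 1) // Monotone ci.1 ∧ ci.1 ci.2 = p} : ℝ) /
    (((m : ℝ) + 1) * (Nat.card {c : Fin (m + 1) → α // Monotone c} : ℝ))

/-- The maximal chain distribution: each `p` gets probability proportional to the number of
maximal chains passing through `p`. -/
def maxchainDist (α : Type*) [PartialOrder α] : α → ℝ := fun p =>
  (Nat.card {C : Set α // IsMaxChain (· ≤ ·) C ∧ p ∈ C} : ℝ) /
    (Nat.card {Cq : Set α × α // IsMaxChain (· ≤ ·) Cq.1 ∧ Cq.2 ∈ Cq.1} : ℝ)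

/-- A poset has coincidental down-degree expectations (CDE). -/
def IsCDE (α : Type*) [PartialOrder α] : Prop :=
  expect (maxchainDist α) ddeg = expect (uni α) ddeg

/-- A poset is mCDE: the expected down-degree with respect to the `k`-chain distribution agrees
with the uniform expected down-degree for every `k = 0, 1, …, r` (i.e. every `k` for which a
`k`-chain exists). -/
def IsMCDE (α : Type*) [PartialOrder α] : Prop :=
  ∀ k : ℕ, (∃ c : Fin (k + 1) → α, StrictMono c) →
    expect (chainDist α k) ddeg = expect (uni α) ddeg

/-- The distributive lattice `J(P)` of order ideals (lower sets) of a poset, ordered by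
inclusion. -/
abbrev OIdeal (α : Type*) [PartialOrder α] : Type _ := {I : Set α // IsLowerSet I}

/-- The indicator statistic that `p` can be toggled into the order ideal `I`. -/
def Tplus {α : Type*} [PartialOrder α] (p : α) (I : OIdeal α) : ℝ :=
  if p ∉ I.1 ∧ IsLowerSet (I.1 ∪ {p}) then 1 else 0

/-- The indicator statistic that `p` can be toggled out of the order ideal `I`. -/
def Tminus {α : Type*} [PartialOrder α] (p : α) (I : OIdeal α) : ℝ :=
  if p ∈ I.1 ∧ IsLowerSet (I.1 \ {p}) then 1 else 0

/-- A distribution on `J(P)` is toggle-symmetric if for every `p` the probability that `p` can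
be toggled in equals the probability that `p` can be toggled out. -/
def ToggleSymmetric {α : Type*} [PartialOrder α] (μ : OIdeal α → ℝ) : Prop :=
  ∀ p : α, expect μ (Tplus p) = expect μ (Tminus p)

/-- `J(P)` is toggle-CDE (tCDE): every toggle-symmetric probability distribution has the same
expected down-degree as the uniform distribution. -/
def IsTCDE (α : Type*) [PartialOrder α] : Prop :=
  ∀ μ : OIdeal α → ℝ, IsProbDist μ → ToggleSymmetric μ →
    expect μ ddeg = expect (uni (OIdeal α)) ddeg

end CDEPaper
namespace CDEPaper

/-! ### Skew shapes and shifted shapes -/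

/-- The boxes of the skew shape `λ/ν` of height `a`, in matrix coordinates with 1-based rows
and columns: row `i` (for `1 ≤ i ≤ a`) consists of the boxes `[i,j]` with `ν i < j ≤ λ i`.
The poset structure is the one induced from the componentwise (product) order on `ℕ × ℕ`. -/
def skewCells (a : ℕ) (lam nu : ℕ → ℕ) : Set (ℕ × ℕ) :=
  {b | 1 ≤ b.1 ∧ b.1 ≤ a ∧ nu b.1 < b.2 ∧ b.2 ≤ lam b.1}

/-- The boxes of the shifted Young diagram of a strict partition `λ` of length `l`:
the boxes `[i,j]` with `1 ≤ i ≤ l` and `i ≤ j ≤ λ i + i - 1`.  The poset structure is the one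
induced from the componentwise (product) order on `ℕ × ℕ`. -/
def shiftCells (l : ℕ) (lam : ℕ → ℕ) : Set (ℕ × ℕ) :=
  {b | 1 ≤ b.1 ∧ b.1 ≤ l ∧ b.1 ≤ b.2 ∧ b.2 < lam b.1 + b.1}

/-- The shifted rook statistic `R^shift_{ij}` on order ideals of (the poset of) `S`. -/
def Rshift (S : Set (ℕ × ℕ)) (i j : ℕ) (I : OIdeal ↥S) : ℝ :=
  (∑ᶠ (q : ↥S), if (q : ℕ × ℕ).1 ≤ i ∧ (q : ℕ × ℕ).2 ≤ j then Tplus q I else 0)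
    + (∑ᶠ (q : ↥S), if i ≤ (q : ℕ × ℕ).1 ∧ j ≤ (q : ℕ × ℕ).2 then Tminus q I else 0)
    - (∑ᶠ (q : ↥S),
        if (q : ℕ × ℕ).1 < i ∧ (q : ℕ × ℕ).2 < j ∧ (q : ℕ × ℕ).1 < (q : ℕ × ℕ).2 then
          Tminus q I else 0)
    - (∑ᶠ (q : ↥S),
        if i < (q : ℕ × ℕ).1 ∧ j < (q : ℕ × ℕ).2 ∧ (q : ℕ × ℕ).1 < (q : ℕ × ℕ).2 then
          Tplus q I else 0)

/-- The shifted diagram of `λ` (of length `l`) has an outward corner indexed by `i'`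
(a north step followed by an east step on the southeast border, occurring at the lattice point
`(i', λ (i'+1) + i')`) if and only if `1 ≤ i' < l` and `λ i' ≥ λ (i'+1) + 2`. -/
def IsCorner (l : ℕ) (lam : ℕ → ℕ) (i' : ℕ) : Prop :=
  1 ≤ i' ∧ i' + 1 ≤ l ∧ lam (i' + 1) + 2 ≤ lam i'

/-- An order ideal `I ∈ J(P_λ^shift)` contains the outward corner indexed by `i'`
(i.e. the lattice path of `I` contains both steps of the corner):  equivalently, `I` contains
both the last box `[i'+1, λ(i'+1)+i']` of row `i'+1` and the box `[i', λ(i'+1)+i'+1]`. -/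
def ContainsCorner (l : ℕ) (lam : ℕ → ℕ) (I : OIdeal ↥(shiftCells l lam)) (i' : ℕ) : Prop :=
  (∃ q : ↥(shiftCells l lam), (q : ℕ × ℕ) = (i' + 1, lam (i' + 1) + i') ∧ q ∈ I.1) ∧
  (∃ q : ↥(shiftCells l lam), (q : ℕ × ℕ) = (i', lam (i' + 1) + i' + 1) ∧ q ∈ I.1)

/-- A (not necessarily strict) partition `ν` (with parts `ν 1 ≥ ν 2 ≥ ⋯`) which, viewed as a
straight shape, is balanced with height and width both equal to `k`:  it has exactly `k`
nonzero parts, its first part is `k`, and every outward corner of its boundary path (which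
occurs at the point `(i, ν (i+1))` whenever `ν i > ν (i+1)`) lies on the anti-diagonal
`i + j = k` of the `k × k` square. -/
def BalancedSquare (k : ℕ) (nu : ℕ → ℕ) : Prop :=
  (∀ i, 1 ≤ i → nu (i + 1) ≤ nu i) ∧
  (∀ i, 1 ≤ i → i ≤ k → 1 ≤ nu i) ∧
  (∀ i, k < i → nu i = 0) ∧
  nu 1 = k ∧
  (∀ i, 1 ≤ i → i + 1 ≤ k → nu (i + 1) < nu i → i + nu (i + 1) = k)

/-- The poset `P_{a,1,1,d}`: a bottom chain `w₁ < ⋯ < w_a`, two incomparable elements `x, y`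
covering `w_a`, and a top chain `z₁ < ⋯ < z_d` with `z₁` covering both `x` and `y`.
It is realized inside `ℕ × ℕ` (with the componentwise order) as
`w_i = (i,i)`, `x = (a+1, a)`, `y = (a, a+1)`, `z_j = (a+j, a+j)`. -/
def Pa11d (a d : ℕ) : Set (ℕ × ℕ) :=
  {p | (1 ≤ p.1 ∧ p.1 ≤ a ∧ p.2 = p.1) ∨ p = (a + 1, a) ∨ p = (a, a + 1) ∨
    (∃ j, 1 ≤ j ∧ j ≤ d ∧ p = (a + j, a + j))}

/-! ### Shifted set-valued tableaux

Letters of the primed alphabet `1 < 1' < 2 < 2' < ⋯` are encoded as natural numbers: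
the letter `m : ℕ` has value `m / 2 + 1` and is primed iff `m` is odd
(so `0 ↦ 1, 1 ↦ 1', 2 ↦ 2, 3 ↦ 2', …`); the order on letters is the usual order on `ℕ`. -/

/-- The value of a letter. -/
def letterVal (m : ℕ) : ℕ := m / 2 + 1

/-- `T` is a shifted set-valued tableau of shape given by the box set `S`:  each box gets a
finite nonempty set of letters, all entries of a box weakly precede all entries of any strictly
larger box, each unprimed letter appears at most once in each column, and each primed letter
appears at most once in each row. -/
def IsSSVT (S : Set (ℕ × ℕ)) (T : ↥S → Finset ℕ) : Prop :=
  (∀ u, (T u).Nonempty) ∧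
  (∀ u v : ↥S, u < v → ∀ x ∈ T u, ∀ y ∈ T v, x ≤ y) ∧
  (∀ u v : ↥S, u ≠ v → (u : ℕ × ℕ).2 = (v : ℕ × ℕ).2 →
    ∀ m : ℕ, m % 2 = 0 → ¬(m ∈ T u ∧ m ∈ T v)) ∧
  (∀ u v : ↥S, u ≠ v → (u : ℕ × ℕ).1 = (v : ℕ × ℕ).1 →
    ∀ m : ℕ, m % 2 = 1 → ¬(m ∈ T u ∧ m ∈ T v))

/-- `T` is standard: distinct entry occurrences have distinct values, and the values used are
exactly `1, 2, …, N` where `N` is the total number of entries. -/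
def IsStandardT (S : Set (ℕ × ℕ)) (T : ↥S → Finset ℕ) : Prop :=
  (∀ u v : ↥S, ∀ x ∈ T u, ∀ y ∈ T v, letterVal x = letterVal y → u = v ∧ x = y) ∧
  (∀ m : ℕ, 1 ≤ m → m ≤ ∑ᶠ (u : ↥S), (T u).card → ∃ u : ↥S, ∃ x ∈ T u, letterVal x = m)

/-- `T` is barely set-valued: exactly one box has two entries; all other boxes have one. -/
def IsBarelySetValued (S : Set (ℕ × ℕ)) (T : ↥S → Finset ℕ) : Prop :=
  ∃ u₀ : ↥S, (T u₀).card = 2 ∧ ∀ u : ↥S, u ≠ u₀ → (T u).card = 1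

/-- `T` is unprimed: no primed letters appear. -/
def IsUnprimed (S : Set (ℕ × ℕ)) (T : ↥S → Finset ℕ) : Prop :=
  ∀ u : ↥S, ∀ x ∈ T u, x % 2 = 0

/-- `g^λ`: the number of unprimed standard shifted tableaux of shape `λ`. -/
def gShift (l : ℕ) (lam : ℕ → ℕ) : ℕ :=
  Nat.card {T : ↥(shiftCells l lam) → Finset ℕ //
    IsSSVT (shiftCells l lam) T ∧ IsStandardT (shiftCells l lam) T ∧
    (∀ u, (T u).card = 1) ∧ IsUnprimed (shiftCells l lam) T}

/-- The number of standard shifted barely set-valued tableaux of shape `λ`. -/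
def numBarelySVT (l : ℕ) (lam : ℕ → ℕ) : ℕ :=
  Nat.card {T : ↥(shiftCells l lam) → Finset ℕ //
    IsSSVT (shiftCells l lam) T ∧ IsStandardT (shiftCells l lam) T ∧
    IsBarelySetValued (shiftCells l lam) T}

/-! ### Toggles, rowmotion, orbits -/

/-- The toggle `τ_p` on order ideals. -/
def toggle {α : Type*} [PartialOrder α] (p : α) (I : OIdeal α) : OIdeal α :=
  if h : p ∉ I.1 ∧ IsLowerSet (I.1 ∪ {p}) then ⟨I.1 ∪ {p}, h.2⟩
  else if h' : p ∈ I.1 ∧ IsLowerSet (I.1 \ {p}) then ⟨I.1 \ {p}, h'.2⟩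
  else I

/-- The composition of the toggles along a list, applied head first. -/
def applyToggles {α : Type*} [PartialOrder α] (L : List α) (I : OIdeal α) : OIdeal α :=
  L.foldl (fun J p => toggle p J) I

/-- The forward orbit of `x` under `Φ` (for invertible `Φ` on a finite set, the orbit). -/
def orbit {β : Type*} (Φ : β → β) (x : β) : Set β := {y | ∃ n : ℕ, Φ^[n] x = y}

/-- The probability distribution that is uniform on the orbit of `x` under `Φ` and zero
outside of it. -/
def orbitDist {β : Type*} (Φ : β → β) (x : β) : β → ℝ := fun y =>
  if y ∈ orbit Φ x then (Nat.card ↥(orbit Φ x) : ℝ)⁻¹ else 0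

/-- Rowmotion on order ideals: `I ↦ {x : x ≤ y for some minimal element y of P \ I}`. -/
def rowmotion {α : Type*} [PartialOrder α] (I : OIdeal α) : OIdeal α :=
  ⟨{x | ∃ y, (y ∉ I.1 ∧ ∀ z, z ∉ I.1 → z ≤ y → z = y) ∧ x ≤ y}, by
    intro a b hba ha
    obtain ⟨y, hy, hay⟩ := ha
    exact ⟨y, hy, le_trans hba hay⟩⟩

/-- The antichain cardinality statistic `I ↦ #max(I)`. -/
def antichainCard {α : Type*} [PartialOrder α] (I : OIdeal α) : ℝ :=
  (Nat.card {p : α // p ∈ I.1 ∧ ∀ q, q ∈ I.1 → p ≤ q → p = q} : ℝ)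

end CDEPaper



section Statement7Helpers
namespace S7

variable {α : Type*} [Finite α] [PartialOrder α]

lemma exists_maximal_mem {s : Set α} (hs : s.Nonempty) :
    ∃ m ∈ s, ∀ x ∈ s, ¬ m < x := by
  have := Fintype.ofFinite α
  obtain ⟨m, hm, h⟩ := Finset.exists_maximal (Set.toFinset_nonempty.mpr hs)
  exact ⟨m, by simpa using hm, fun x hx hmx => hmx.not_ge (h (by simpa using hx) hmx.le)⟩

lemma exists_minimal_mem {s : Set α} (hs : s.Nonempty) :
    ∃ m ∈ s, ∀ x ∈ s, ¬ x < m := by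
  have := Fintype.ofFinite α
  obtain ⟨m, hm, h⟩ := Finset.exists_minimal (Set.toFinset_nonempty.mpr hs)
  exact ⟨m, by simpa using hm, fun x hx hxm => hxm.not_ge (h (by simpa using hx) hxm.le)⟩

lemma le_covBy_of_lt {p q : α} (h : p < q) : ∃ c, p ≤ c ∧ c ⋖ q := by
  obtain ⟨m, hm, hmax⟩ := exists_maximal_mem (s := {x | p ≤ x ∧ x < q}) ⟨p, le_refl p, h⟩
  exact ⟨m, hm.1, hm.2, fun x hmx hxq => hmax x ⟨hm.1.trans hmx.le, hxq⟩ hmx⟩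

lemma covBy_le_of_lt {p q : α} (h : p < q) : ∃ c, p ⋖ c ∧ c ≤ q := by
  obtain ⟨m, hm, hmin⟩ := exists_minimal_mem (s := {x | p < x ∧ x ≤ q}) ⟨q, h, le_refl q⟩
  exact ⟨m, ⟨hm.1, fun x hpx hxm => hmin x ⟨hpx, hxm.le.trans hm.2⟩ hxm⟩, hm.2⟩

lemma not_isMin_iff' {p : α} : (¬ IsMin p) ↔ ∃ q, q ⋖ p := by
  constructor
  · intro h
    obtain ⟨q, hq⟩ := not_isMin_iff.mp h
    obtain ⟨c, _, hc⟩ := le_covBy_of_lt hq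
    exact ⟨c, hc⟩
  · rintro ⟨q, hq⟩ hmin
    exact absurd (hmin hq.le) (not_le_of_gt hq.lt)

lemma not_isMax_iff' {p : α} : (¬ IsMax p) ↔ ∃ q, p ⋖ q := by
  constructor
  · intro h
    obtain ⟨q, hq⟩ := not_isMax_iff.mp h
    obtain ⟨c, hc, _⟩ := covBy_le_of_lt hq
    exact ⟨c, hc⟩
  · rintro ⟨q, hq⟩ hmax
    exact absurd (hmax hq.le) (not_le_of_gt hq.lt)

lemma rk_lt_of_lt (rk : α → ℕ) (hcov : ∀ p q : α, p ⋖ q → rk q = rk p + 1)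
    {p q : α} (h : p < q) : rk p < rk q := by
  have : WellFoundedLT α := Finite.to_wellFoundedLT
  induction q using WellFoundedLT.induction generalizing p with
  | _ q ih =>
    obtain ⟨c, hpc, hcq⟩ := le_covBy_of_lt h
    have h1 : rk q = rk c + 1 := hcov c q hcq
    rcases eq_or_lt_of_le hpc with rfl | hlt
    · omega
    · have := ih c hcq.lt hlt; omega

lemma card_above_lt {p q : α} (h : p < q) :
    Nat.card {x // q < x} < Nat.card {x // p < x} := by
  have h1 : {x : α | q < x} ⊂ {x : α | p < x} :=
    ⟨fun x hx => h.trans hx, fun hsub => absurd (hsub (show q ∈ {x | p < x} from h)) (lt_irrefl q)⟩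
  have := Set.ncard_lt_ncard h1 (Set.toFinite _)
  rw [← Nat.card_coe_set_eq, ← Nat.card_coe_set_eq] at this
  exact this

lemma card_below_lt {p q : α} (h : p < q) :
    Nat.card {x // x < p} < Nat.card {x // x < q} := by
  have h1 : {x : α | x < p} ⊂ {x : α | x < q} :=
    ⟨fun x hx => hx.trans h, fun hsub => absurd (hsub (show p ∈ {x | x < q} from h)) (lt_irrefl p)⟩
  have := Set.ncard_lt_ncard h1 (Set.toFinite _)
  rw [← Nat.card_coe_set_eq, ← Nat.card_coe_set_eq] at this
  exact this

noncomputable def upList {α : Type*} [Finite α] [PartialOrder α] : α → List α := fun p =>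
  if h : ∃ q, p ⋖ q then p :: upList h.choose else [p]
termination_by p => Nat.card {x // p < x}
decreasing_by exact card_above_lt h.choose_spec.lt

noncomputable def downList {α : Type*} [Finite α] [PartialOrder α] : α → List α := fun p =>
  if h : ∃ q, q ⋖ p then p :: downList h.choose else [p]
termination_by p => Nat.card {x // x < p}
decreasing_by exact card_below_lt h.choose_spec.lt

lemma upList_def (p : α) :
    upList p = if h : ∃ q, p ⋖ q then p :: upList h.choose else [p] := by rw [upList]

lemma downList_def (p : α) :
    downList p = if h : ∃ q, q ⋖ p then p :: downList h.choose else [p] := by rw [downList]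

variable (rk : α → ℕ) (hcov : ∀ p q : α, p ⋖ q → rk q = rk p + 1)

include hcov in
lemma upList_facts : ∀ n (p : α), Nat.card {x // p < x} ≤ n →
    List.Chain' (· ⋖ ·) (upList p) ∧ (∃ t, upList p = p :: t) ∧
    ∀ hne : upList p ≠ [],
      IsMax ((upList p).getLast hne) ∧
      rk ((upList p).getLast hne) + 1 = rk p + (upList p).length := by
  intro n
  induction n using Nat.strong_induction_on with
  | _ n ih =>
    intro p hn
    rw [upList_def p]
    by_cases h : ∃ q, p ⋖ q
    · rw [dif_pos h]
      have hpq : p ⋖ h.choose := h.choose_spec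
      have hcard := card_above_lt (p := p) hpq.lt
      obtain ⟨ih1, ⟨t, ht⟩, ih3⟩ := ih _ (lt_of_lt_of_le hcard hn) h.choose le_rfl
      have hne' : upList h.choose ≠ [] := by rw [ht]; simp
      obtain ⟨hmax, hrk⟩ := ih3 hne'
      refine ⟨?_, ⟨_, rfl⟩, ?_⟩
      · rw [List.Chain', List.isChain_cons]
        refine ⟨fun b hb => ?_, ih1⟩
        rw [ht] at hb
        simp at hb
        exact hb ▸ hpq
      · intro hne
        rw [List.getLast_cons hne']
        refine ⟨hmax, ?_⟩
        have := hcov p h.choose hpq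
        simp only [List.length_cons]
        omega
    · rw [dif_neg h]
      refine ⟨List.isChain_singleton _, ⟨[], rfl⟩, fun hne => ⟨?_, by simp⟩⟩
      simp only [List.getLast_singleton]
      intro b hb
      rcases eq_or_lt_of_le hb with rfl | hlt
      · exact le_refl _
      · obtain ⟨c, hc, _⟩ := covBy_le_of_lt hlt
        exact absurd ⟨c, hc⟩ h

include hcov in
lemma downList_facts : ∀ n (p : α), Nat.card {x // x < p} ≤ n →
    List.Chain' (fun a b => b ⋖ a) (downList p) ∧ (∃ t, downList p = p :: t) ∧
    ∀ hne : downList p ≠ [],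
      IsMin ((downList p).getLast hne) ∧
      rk p + 1 = rk ((downList p).getLast hne) + (downList p).length := by
  intro n
  induction n using Nat.strong_induction_on with
  | _ n ih =>
    intro p hn
    rw [downList_def p]
    by_cases h : ∃ q, q ⋖ p
    · rw [dif_pos h]
      have hpq : h.choose ⋖ p := h.choose_spec
      have hcard := card_below_lt (q := p) hpq.lt
      obtain ⟨ih1, ⟨t, ht⟩, ih3⟩ := ih _ (lt_of_lt_of_le hcard hn) h.choose le_rfl
      have hne' : downList h.choose ≠ [] := by rw [ht]; simp
      obtain ⟨hmin, hrk⟩ := ih3 hne'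
      refine ⟨?_, ⟨_, rfl⟩, ?_⟩
      · rw [List.Chain', List.isChain_cons]
        refine ⟨fun b hb => ?_, ih1⟩
        rw [ht] at hb
        simp at hb
        exact hb ▸ hpq
      · intro hne
        rw [List.getLast_cons hne']
        refine ⟨hmin, ?_⟩
        have := hcov h.choose p hpq
        simp only [List.length_cons]
        omega
    · rw [dif_neg h]
      refine ⟨List.isChain_singleton _, ⟨[], rfl⟩, fun hne => ⟨?_, by simp⟩⟩
      simp only [List.getLast_singleton]
      intro b hb
      rcases eq_or_lt_of_le hb with rfl | hlt
      · exact le_refl _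
      · obtain ⟨c, _, hc⟩ := le_covBy_of_lt hlt
        exact absurd ⟨c, hc⟩ h

end S7

namespace S7B
open S7
variable {α : Type*} [Finite α] [PartialOrder α]

lemma head_le_of_mem : ∀ (L : List α), List.Chain' (· ≤ ·) L → ∀ (hne : L ≠ []),
    ∀ y ∈ L, L.head hne ≤ y := by
  intro L
  induction L with
  | nil => simp
  | cons a l ih =>
    intro hc hne y hy
    rcases List.mem_cons.mp hy with rfl | hyl
    · exact le_refl _
    · cases l with
      | nil => simp at hyl
      | cons c l' =>
        have h1 : a ≤ c := (List.isChain_cons_cons.mp hc).1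
        have h2 := ih (List.isChain_cons_cons.mp hc).2 (by simp) y hyl
        simpa using h1.trans (by simpa using h2)

lemma le_getLast_of_mem : ∀ (L : List α), List.Chain' (· ≤ ·) L → ∀ (hne : L ≠ []),
    ∀ y ∈ L, y ≤ L.getLast hne := by
  intro L
  induction L with
  | nil => simp
  | cons a l ih =>
    intro hc hne y hy
    cases l with
    | nil => simp at hy; simp [hy]
    | cons c l' =>
      rw [List.getLast_cons (by simp)]
      rcases List.mem_cons.mp hy with rfl | hyl
      · exact ((List.isChain_cons_cons.mp hc).1).trans
          (ih (List.isChain_cons_cons.mp hc).2 (by simp) c (by simp))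
      · exact ih (List.isChain_cons_cons.mp hc).2 (by simp) y hyl

lemma mem_of_chain : ∀ (L : List α), List.Chain' (· ⋖ ·) L →
    ∀ x : α, (∀ y ∈ L, x ≤ y ∨ y ≤ x) → ∀ (hne : L ≠ []),
    L.head hne ≤ x → x ≤ L.getLast hne → x ∈ L := by
  intro L
  induction L with
  | nil => simp
  | cons a l ih =>
    intro hc x hcmp hne hhead hlast
    cases l with
    | nil =>
      simp only [List.getLast_singleton] at hlast
      simp only [List.head_cons] at hhead
      simp [le_antisymm hlast hhead]
    | cons b l' =>
      have hab : a ⋖ b := (List.isChain_cons_cons.mp hc).1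
      have hc' := (List.isChain_cons_cons.mp hc).2
      rcases hcmp b (by simp) with hxb | hbx
      · -- x ≤ b, and a ≤ x
        simp only [List.head_cons] at hhead
        rcases eq_or_lt_of_le hhead with rfl | hax
        · simp
        · rcases eq_or_lt_of_le hxb with rfl | hxb'
          · simp
          · exact absurd hxb' (hab.2 hax)
      · -- b ≤ x
        have := ih hc' x (fun y hy => hcmp y (by simp [hy])) (by simp)
          (by simpa using hbx) (by rw [List.getLast_cons (by simp : (b :: l') ≠ [])] at hlast; exact hlast)
        exact List.mem_cons_of_mem _ this

end S7B

namespace S7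
open S7B
variable {α : Type*} [Finite α] [PartialOrder α]
variable (rk : α → ℕ) (hcov : ∀ p q : α, p ⋖ q → rk q = rk p + 1)

include hcov in
lemma rk_isMin_isMax (r : ℕ) (hler : ∀ p, rk p ≤ r)
    (hgraded : ∀ C : Set α, IsMaxChain (· ≤ ·) C → Nat.card ↥C = r + 1) (p : α) :
    (IsMin p → rk p = 0) ∧ (IsMax p → rk p = r) := by
  obtain ⟨dchain, ⟨td, htd⟩, drest⟩ :=
    downList_facts rk hcov (Nat.card {x // x < p}) p le_rfl
  obtain ⟨uchain, ⟨tu, htu⟩, urest⟩ :=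
    upList_facts rk hcov (Nat.card {x // p < x}) p le_rfl
  have hned : downList p ≠ [] := by rw [htd]; simp
  have hneu : upList p ≠ [] := by rw [htu]; simp
  obtain ⟨hbmin, hbrk⟩ := drest hned
  obtain ⟨htmax, htrk⟩ := urest hneu
  set b := (downList p).getLast hned with hbdef
  set t := (upList p).getLast hneu with htdef
  set L : List α := (downList p).reverse ++ (upList p).tail with hLdef
  have hLne : L ≠ [] := by
    rw [hLdef]
    intro h
    rcases List.append_eq_nil_iff.mp h with ⟨h1, _⟩
    exact hned (by simpa using h1)
  -- Chain'
  have hLchain : List.Chain' (· ⋖ ·) L := by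
    refine List.IsChain.append ?_ ?_ ?_
    · exact List.isChain_reverse.mpr dchain
    · exact uchain.tail
    · intro x hx y hy
      rw [List.getLast?_reverse] at hx
      rw [htd] at hx
      simp only [List.head?_cons, Option.mem_def, Option.some.injEq] at hx
      subst hx
      rw [htu] at hy uchain
      rw [List.Chain', List.isChain_cons] at uchain
      exact uchain.1 y hy
  have hLchainLe : List.Chain' (· ≤ ·) L := hLchain.imp fun _ _ h => h.le
  have hPL : List.Pairwise (· < ·) L :=
    List.isChain_iff_pairwise.mp (hLchain.imp fun _ _ h => h.lt)
  have htot : ∀ a ∈ L, ∀ c ∈ L, a ≠ c → a < c ∨ c < a := by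
    intro a ha c hc hac
    haveI : Std.Symm (fun x y : α => x < y ∨ y < x) := ⟨fun _ _ h => h.symm⟩
    exact List.Pairwise.forall (R := fun x y : α => x < y ∨ y < x) (hPL.imp (fun h => Or.inl h)) ha hc hac
  -- memberships
  have hpL : p ∈ L := by
    rw [hLdef]
    exact List.mem_append_left _ (List.mem_reverse.mpr (by rw [htd]; simp))
  have hbL : b ∈ L := by
    rw [hLdef]
    exact List.mem_append_left _ (List.mem_reverse.mpr (List.getLast_mem hned))
  have htL : t ∈ L := by
    have h1 : t ∈ upList p := List.getLast_mem hneu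
    rw [htu] at h1
    rcases List.mem_cons.mp h1 with h2 | h2
    · rw [h2]; exact hpL
    · rw [hLdef]
      refine List.mem_append_right _ ?_
      rw [htu]
      simpa using h2
  -- maximal chain
  set C : Set α := {x | x ∈ L} with hCdef
  have hmaxchain : IsMaxChain (· ≤ ·) C := by
    constructor
    · intro x hx y hy hxy
      exact (htot x hx y hy hxy).imp le_of_lt le_of_lt
    · intro s hs hsub
      refine Set.Subset.antisymm hsub fun x hx => ?_
      have hcmp : ∀ y ∈ L, x ≤ y ∨ y ≤ x := by
        intro y hy
        by_cases hxy : x = y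
        · exact Or.inl hxy.le
        · exact hs hx (hsub hy) hxy
      have hbx : b ≤ x := by
        rcases hcmp b hbL with h | h
        · exact hbmin h
        · exact h
      have hxt : x ≤ t := by
        rcases hcmp t htL with h | h
        · exact h
        · exact htmax h
      exact mem_of_chain L hLchain x hcmp hLne
        ((head_le_of_mem L hLchainLe hLne b hbL).trans hbx)
        (hxt.trans (le_getLast_of_mem L hLchainLe hLne t htL))
  -- cardinality
  have hnd : L.Nodup := hPL.imp ne_of_lt
  have hcard : Nat.card ↥C = L.length := by
    have h1 : C = ↑L.toFinset := by rw [List.coe_toFinset]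
    rw [h1, Nat.card_coe_set_eq, Set.ncard_coe_finset, List.toFinset_card_of_nodup hnd]
  have hlen : L.length = r + 1 := by rw [← hgraded C hmaxchain, hcard]
  have hlen2 : L.length + 1 = (downList p).length + (upList p).length := by
    rw [hLdef, List.length_append, List.length_reverse, htu]
    simp
    omega
  have hbrk0 : rk b = 0 ∧ rk t = r := by
    have h1 := hler t
    omega
  constructor
  · intro hmin
    have hdl : downList p = [p] := by
      rw [downList_def, dif_neg]
      rintro ⟨q, hq⟩
      exact absurd (hmin hq.le) (not_le_of_gt hq.lt)
    have : b = p := by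
      have h1 : (downList p).getLast? = some b := List.getLast?_eq_getLast hned
      rw [hdl] at h1
      simpa using h1.symm
    rw [← this]; exact hbrk0.1
  · intro hmax
    have hul : upList p = [p] := by
      rw [upList_def, dif_neg]
      rintro ⟨q, hq⟩
      exact absurd (hmax hq.le) (not_le_of_gt hq.lt)
    have : t = p := by
      have h1 : (upList p).getLast? = some t := List.getLast?_eq_getLast hneu
      rw [hul] at h1
      simpa using h1.symm
    rw [← this]; exact hbrk0.2

end S7

end Statement7Helpers

namespace CDEPaper
open S7 S7B

variable {α : Type*} [Finite α] [PartialOrder α]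

/-- The order ideal of all elements of rank `< j`. -/
def idlJ (rk : α → ℕ) (hcov : ∀ p q : α, p ⋖ q → rk q = rk p + 1) (j : ℕ) : OIdeal α :=
  ⟨{x | rk x < j}, by
    intro a b hba ha
    rcases eq_or_lt_of_le hba with rfl | hlt
    · exact ha
    · exact lt_trans (rk_lt_of_lt rk hcov hlt) ha⟩

variable (rk : α → ℕ) (hcov : ∀ p q : α, p ⋖ q → rk q = rk p + 1)
  (r : ℕ) (hler : ∀ p, rk p ≤ r)
  (hgraded : ∀ C : Set α, IsMaxChain (· ≤ ·) C → Nat.card ↥C = r + 1)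

include hcov hler hgraded in
lemma tplus_idlJ (p : α) (j : ℕ) :
    Tplus p (idlJ rk hcov j) = if j = rk p then 1 else 0 := by
  have hiff : (p ∉ (idlJ rk hcov j).1 ∧ IsLowerSet ((idlJ rk hcov j).1 ∪ {p})) ↔ j = rk p := by
    constructor
    · rintro ⟨h1, h2⟩
      have hj : j ≤ rk p := by
        simp only [idlJ, Set.mem_setOf_eq] at h1; omega
      by_cases hmin : IsMin p
      · have h0 := (rk_isMin_isMax rk hcov r hler hgraded p).1 hmin
        omega
      · obtain ⟨q, hq⟩ := not_isMin_iff'.mp hmin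
        have hqmem : q ∈ (idlJ rk hcov j).1 ∪ {p} :=
          h2 hq.le (by simp)
        rcases hqmem with hql | hqr
        · have : rk q < j := hql
          have := hcov q p hq
          omega
        · exact absurd (Set.mem_singleton_iff.mp hqr) (ne_of_lt hq.lt)
    · rintro rfl
      refine ⟨by simp [idlJ], ?_⟩
      intro a b hba ha
      rcases ha with hal | har
      · left
        have : rk a < rk p := hal
        rcases eq_or_lt_of_le hba with rfl | hlt
        · exact this
        · exact lt_trans (rk_lt_of_lt rk hcov hlt) this
      · rw [Set.mem_singleton_iff.mp har] at hba
        rcases eq_or_lt_of_le hba with rfl | hlt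
        · right; rfl
        · left; exact rk_lt_of_lt rk hcov hlt
  simp only [Tplus]
  exact if_congr hiff rfl rfl

include hcov hler hgraded in
lemma tminus_idlJ (p : α) (j : ℕ) (hj : j ≤ r + 1) :
    Tminus p (idlJ rk hcov j) = if j = rk p + 1 then 1 else 0 := by
  have hiff : (p ∈ (idlJ rk hcov j).1 ∧ IsLowerSet ((idlJ rk hcov j).1 \ {p})) ↔ j = rk p + 1 := by
    constructor
    · rintro ⟨h1, h2⟩
      have hpj : rk p < j := h1
      by_cases hmax : IsMax p
      · have hr := (rk_isMin_isMax rk hcov r hler hgraded p).2 hmax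
        omega
      · obtain ⟨q, hq⟩ := not_isMax_iff'.mp hmax
        by_contra hne
        have hqj : rk q < j := by
          have := hcov p q hq
          omega
        have hqmem : q ∈ (idlJ rk hcov j).1 \ {p} :=
          ⟨hqj, fun h => absurd (Set.mem_singleton_iff.mp h) (ne_of_gt hq.lt)⟩
        have := h2 hq.le hqmem
        exact this.2 rfl
    · rintro rfl
      refine ⟨by simp [idlJ], ?_⟩
      intro a b hba ha
      obtain ⟨ha1, ha2⟩ := ha
      have haj : rk a < rk p + 1 := ha1
      have hbj : rk b < rk p + 1 := by
        rcases eq_or_lt_of_le hba with rfl | hlt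
        · exact haj
        · exact lt_trans (rk_lt_of_lt rk hcov hlt) haj
      refine ⟨hbj, fun hb => ?_⟩
      rw [Set.mem_singleton_iff.mp hb] at hba
      rcases eq_or_lt_of_le hba with heq | hlt
      · exact ha2 (Set.mem_singleton_iff.mpr heq.symm)
      · have := rk_lt_of_lt rk hcov hlt
        omega
  simp only [Tminus]
  exact if_congr hiff rfl rfl

lemma diff_covby (I : OIdeal α) (p : α) (hp : p ∈ I.1) (hl : IsLowerSet (I.1 \ {p})) :
    (⟨I.1 \ {p}, hl⟩ : OIdeal α) ⋖ I := by
  constructor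
  · refine lt_of_le_of_ne (Subtype.coe_le_coe.mp ?_) (fun h => ?_)
    · exact Set.diff_subset
    · have := congrArg Subtype.val h
      simp only at this
      rw [← this] at hp
      exact hp.2 rfl
  · intro K hK1 hK2
    have hKle : K.1 ⊆ I.1 := Subtype.coe_le_coe.mpr hK2.le
    have hne : K.1 ≠ I.1 := fun h => hK2.ne (Subtype.ext h)
    have hdle : I.1 \ {p} ⊆ K.1 := Subtype.coe_le_coe.mpr hK1.le
    have hx : ∃ x ∈ K.1, x ∉ I.1 \ {p} := by
      by_contra hcon
      push_neg at hcon
      exact absurd (show K ≤ (⟨I.1 \ {p}, hl⟩ : OIdeal α) from Subtype.coe_le_coe.mp (fun x hx => hcon x hx)) hK1.not_ge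
    obtain ⟨x, hxK, hxd⟩ := hx
    have hxI : x ∈ I.1 := hKle hxK
    have hxp : x = p := by
      by_contra h
      exact hxd ⟨hxI, h⟩
    apply hne
    refine Set.Subset.antisymm hKle fun y hy => ?_
    by_cases hyp : y = p
    · rw [hyp, ← hxp]; exact hxK
    · exact hdle ⟨hy, hyp⟩

lemma ddeg_eq_sum_tminus [Fintype α] (I : OIdeal α) :
    ddeg I = ∑ p : α, Tminus p I := by
  have hbij : Nat.card {p : α // p ∈ I.1 ∧ IsLowerSet (I.1 \ {p})}
      = Nat.card {J : OIdeal α // J ⋖ I} := by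
    apply Nat.card_eq_of_bijective
      (fun p => ⟨⟨I.1 \ {p.1}, p.2.2⟩, diff_covby I p.1 p.2.1 p.2.2⟩)
    constructor
    · rintro ⟨p, hp⟩ ⟨q, hq⟩ h
      have h1 := congrArg (fun J => (J.1 : OIdeal α).1) h
      simp only at h1
      have : p = q := by
        by_contra hpq
        have hp' : p ∉ I.1 \ {p} := fun h => h.2 rfl
        rw [h1] at hp'
        exact hp' ⟨hp.1, hpq⟩
      exact Subtype.ext this
    · rintro ⟨J, hJ⟩
      have hJle : J.1 ⊆ I.1 := Subtype.coe_le_coe.mpr hJ.lt.le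
      have hJne : J.1 ≠ I.1 := fun h => hJ.lt.ne (Subtype.ext h)
      have hD : (I.1 \ J.1).Nonempty := by
        rcases Set.not_subset.mp (fun h => hJne (Set.Subset.antisymm hJle h)) with ⟨x, hx1, hx2⟩
        exact ⟨x, hx1, hx2⟩
      obtain ⟨p, hp, hpmin⟩ := exists_minimal_mem hD
      have hKl : IsLowerSet (J.1 ∪ {p}) := by
        intro a b hba ha
        rcases ha with hal | har
        · exact Or.inl (J.2 hba hal)
        · rw [Set.mem_singleton_iff.mp har] at hba
          rcases eq_or_lt_of_le hba with rfl | hlt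
          · exact Or.inr rfl
          · left
            have hbI : b ∈ I.1 := I.2 hlt.le hp.1
            by_contra hbJ
            exact hpmin b ⟨hbI, hbJ⟩ hlt
      set K : OIdeal α := ⟨J.1 ∪ {p}, hKl⟩ with hK
      have hJK : J < K := by
        refine lt_of_le_of_ne (Subtype.coe_le_coe.mp Set.subset_union_left) fun h => ?_
        have := congrArg Subtype.val h
        simp only [hK] at this
        have hpK : p ∈ J.1 ∪ {p} := Or.inr rfl
        rw [← this] at hpK
        exact hp.2 hpK
      have hKI : K ≤ I := by
        refine Subtype.coe_le_coe.mp ?_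
        intro x hx
        rcases hx with h | h
        · exact hJle h
        · rw [Set.mem_singleton_iff.mp h]; exact hp.1
      have hKeqI : K = I := by
        by_contra h
        exact hJ.2 hJK (lt_of_le_of_ne hKI h)
      have hJ1 : J.1 = I.1 \ {p} := by
        have hIK : I.1 = J.1 ∪ {p} := by rw [← hKeqI]
        ext x
        constructor
        · intro hx
          refine ⟨hJle hx, fun h => ?_⟩
          rw [Set.mem_singleton_iff.mp h] at hx
          exact hp.2 hx
        · intro hx
          rcases (hIK ▸ hx.1) with h | h
          · exact h
          · exact absurd (Set.mem_singleton_iff.mp h) hx.2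
      refine ⟨⟨p, hp.1, hJ1 ▸ J.2⟩, ?_⟩
      apply Subtype.ext
      apply Subtype.ext
      exact hJ1.symm
  rw [ddeg, ← hbij]
  have h1 : ∑ p : α, Tminus p I
      = ((Finset.univ.filter fun p : α => p ∈ I.1 ∧ IsLowerSet (I.1 \ {p})).card : ℝ) := by
    rw [← Finset.sum_boole]
    rfl
  rw [h1, Nat.card_eq_fintype_card, Fintype.card_subtype]

end CDEPaper


namespace CDEPaper

/-- Proposition `prop:togsymedgedensity`.  Let `P` be a finite graded poset
of rank `r` (all maximal chains have length `r`; equivalently `P` is ranked, with rank function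
`rk`, with maximum rank value `r`) for which `J(P)` is tCDE.  Then the edge density of `J(P)`
is `E(uni_{J(P)}; ddeg) = #P / (r + 2)`. -/
theorem statement7 (α : Type*) [Finite α] [PartialOrder α] [Nonempty α] (r : ℕ)
    (rk : α → ℕ) (h0 : ∃ p, rk p = 0)
    (hcov : ∀ p q : α, p ⋖ q → rk q = rk p + 1)
    (hler : ∀ p, rk p ≤ r) (hrtop : ∃ p, rk p = r)
    (hgraded : ∀ C : Set α, IsMaxChain (· ≤ ·) C → Nat.card ↥C = r + 1)
    (htcde : IsTCDE α) :
    expect (uni (OIdeal α)) ddeg = (Nat.card α : ℝ) / ((r : ℝ) + 2) := by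
  have fA : Fintype α := Fintype.ofFinite α
  have fJ : Fintype (OIdeal α) := Fintype.ofFinite _
  have hr2 : ((r : ℝ) + 2) ≠ 0 := by positivity
  set μ : OIdeal α → ℝ := fun I =>
    (∑ j ∈ Finset.range (r + 2), if idlJ rk hcov j = I then (1 : ℝ) else 0) / ((r : ℝ) + 2)
    with hμ
  have key : ∀ f : OIdeal α → ℝ,
      expect μ f = (∑ j ∈ Finset.range (r + 2), f (idlJ rk hcov j)) / ((r : ℝ) + 2) := by
    intro f
    rw [expect, finsum_eq_sum_of_fintype]
    have h1 : ∀ I : OIdeal α, μ I * f I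
        = (∑ j ∈ Finset.range (r + 2), if idlJ rk hcov j = I then f I else 0) / ((r : ℝ) + 2) := by
      intro I
      simp only [hμ]
      rw [div_mul_eq_mul_div, Finset.sum_mul]
      congr 1
      refine Finset.sum_congr rfl fun j _ => ?_
      split <;> simp
    rw [Finset.sum_congr rfl fun I _ => h1 I, ← Finset.sum_div]
    congr 1
    rw [Finset.sum_comm]
    refine Finset.sum_congr rfl fun j _ => ?_
    rw [Finset.sum_ite_eq]
    simp
  have hminus : ∀ p : α, ∑ j ∈ Finset.range (r + 2), Tminus p (idlJ rk hcov j) = 1 := by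
    intro p
    rw [Finset.sum_congr rfl fun j hj =>
      tminus_idlJ rk hcov r hler hgraded p j (by have := Finset.mem_range.mp hj; omega)]
    rw [Finset.sum_ite_eq']
    have := hler p
    rw [if_pos (Finset.mem_range.mpr (by omega))]
  have hplus : ∀ p : α, ∑ j ∈ Finset.range (r + 2), Tplus p (idlJ rk hcov j) = 1 := by
    intro p
    rw [Finset.sum_congr rfl fun j _ => tplus_idlJ rk hcov r hler hgraded p j]
    rw [Finset.sum_ite_eq']
    have := hler p
    rw [if_pos (Finset.mem_range.mpr (by omega))]
  have hprob : IsProbDist μ := by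
    constructor
    · intro I
      apply div_nonneg
      · exact Finset.sum_nonneg fun j _ => by split <;> norm_num
      · positivity
    · have h2 : (∑ᶠ I : OIdeal α, μ I) = expect μ fun _ => 1 := by
        rw [expect]
        simp
      rw [h2, key, Finset.sum_const, Finset.card_range, nsmul_eq_mul, mul_one]
      push_cast
      exact div_self hr2
  have hts : ToggleSymmetric μ := by
    intro p
    rw [key, key, hplus p, hminus p]
  have hmain := htcde μ hprob hts
  rw [← hmain, key]
  congr 1
  rw [Finset.sum_congr rfl fun j _ => ddeg_eq_sum_tminus (idlJ rk hcov j)]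
  rw [Finset.sum_comm]
  rw [Finset.sum_congr rfl fun p _ => hminus p]
  rw [Finset.sum_const, Finset.card_univ, nsmul_eq_mul, mul_one, Nat.card_eq_fintype_card]

end CDEPaper
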